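/- The Habiro polynomials of the 5_2 knot, H_n(q) = (-1)^n q^{n(n+3)/2} Σ_{k=0}^n q^{k(k+1)} binom(n,k)_q, satisfy the second-order recursion H_{n+2}(q) + q^{3+n}(1 + q - q^{2+n} + q^{4+2n}) H_{n+1}(q) - q^{6+2n}(-1 + q^{1+n}) H_n(q) = 0 for all n ≥ 0, with H_0(q) = 1. -/

import Mathlib

open Finset

/-- (q;q)_n = ∏_{j=1}^n (1 - q^j). -/
noncomputable def qPoch (q : ℂ) (n : ℕ) : ℂ := ∏ j ∈ Finset.range n, (1 - q ^ (j + 1))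


/-- The Gaussian binomial coefficient binom(n,k)_q. -/
noncomputable def qBinom (q : ℂ) (n k : ℕ) : ℂ :=
  qPoch q n / (qPoch q k * qPoch q (n - k))

lemma qPoch_succ (q : ℂ) (n : ℕ) : qPoch q (n + 1) = qPoch q n * (1 - q ^ (n + 1)) := by
  rw [qPoch, qPoch, Finset.prod_range_succ]

lemma qPoch_ne_zero (q : ℂ) (hq : ∀ j : ℕ, 1 ≤ j → q ^ j ≠ 1) (n : ℕ) : qPoch q n ≠ 0 := by
  rw [qPoch, Finset.prod_ne_zero_iff]
  intro j _
  exact sub_ne_zero.mpr (Ne.symm (hq (j + 1) (by omega)))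

lemma one_sub_pow_ne_zero (q : ℂ) (hq : ∀ j : ℕ, 1 ≤ j → q ^ j ≠ 1) (n : ℕ) :
    (1 : ℂ) - q ^ (n + 1) ≠ 0 :=
  sub_ne_zero.mpr (Ne.symm (hq (n + 1) (by omega)))

lemma qBinom_zero (q : ℂ) (hq : ∀ j : ℕ, 1 ≤ j → q ^ j ≠ 1) (n : ℕ) : qBinom q n 0 = 1 := by
  rw [qBinom]
  simp only [Nat.sub_zero, qPoch]
  rw [Finset.prod_range_zero, one_mul]
  exact div_self (qPoch_ne_zero q hq n)

lemma qBinom_self (q : ℂ) (hq : ∀ j : ℕ, 1 ≤ j → q ^ j ≠ 1) (n : ℕ) : qBinom q n n = 1 := by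
  rw [qBinom]
  simp only [Nat.sub_self, qPoch, Finset.prod_range_zero, mul_one]
  exact div_self (qPoch_ne_zero q hq n)

lemma qBinom_pascal1 (q : ℂ) (hq : ∀ j : ℕ, 1 ≤ j → q ^ j ≠ 1) (k m : ℕ) :
    qBinom q (k + m + 2) (k + 1)
      = qBinom q (k + m + 1) (k + 1) + q ^ (m + 1) * qBinom q (k + m + 1) k := by
  have h1 : k + m + 2 - (k + 1) = m + 1 := by omega
  have h2 : k + m + 1 - (k + 1) = m := by omega
  have h3 : k + m + 1 - k = m + 1 := by omega
  rw [qBinom, qBinom, qBinom, h1, h2, h3]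
  rw [show k + m + 2 = (k + m + 1) + 1 from rfl, qPoch_succ, qPoch_succ q m, qPoch_succ q k]
  have hk := qPoch_ne_zero q hq k
  have hm := qPoch_ne_zero q hq m
  have hkm := qPoch_ne_zero q hq (k + m + 1)
  have h1k := one_sub_pow_ne_zero q hq k
  have h1m := one_sub_pow_ne_zero q hq m
  have h1km := one_sub_pow_ne_zero q hq (k + m + 1)
  field_simp
  ring

lemma qBinom_pascal2 (q : ℂ) (hq : ∀ j : ℕ, 1 ≤ j → q ^ j ≠ 1) (k m : ℕ) :
    qBinom q (k + m + 2) (k + 1)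
      = q ^ (k + 1) * qBinom q (k + m + 1) (k + 1) + qBinom q (k + m + 1) k := by
  have h1 : k + m + 2 - (k + 1) = m + 1 := by omega
  have h2 : k + m + 1 - (k + 1) = m := by omega
  have h3 : k + m + 1 - k = m + 1 := by omega
  rw [qBinom, qBinom, qBinom, h1, h2, h3]
  rw [show k + m + 2 = (k + m + 1) + 1 from rfl, qPoch_succ, qPoch_succ q m, qPoch_succ q k]
  have hk := qPoch_ne_zero q hq k
  have hm := qPoch_ne_zero q hq m
  have hkm := qPoch_ne_zero q hq (k + m + 1)
  have h1k := one_sub_pow_ne_zero q hq k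
  have h1m := one_sub_pow_ne_zero q hq m
  have h1km := one_sub_pow_ne_zero q hq (k + m + 1)
  field_simp
  ring

/-- Truncated Gaussian binomial: zero out of range. -/
noncomputable def Gb (q : ℂ) (n k : ℕ) : ℂ := if k ≤ n then qBinom q n k else 0

lemma Gb_zero (q : ℂ) (hq : ∀ j : ℕ, 1 ≤ j → q ^ j ≠ 1) (n : ℕ) : Gb q n 0 = 1 := by
  rw [Gb, if_pos (Nat.zero_le n), qBinom_zero q hq]

lemma Gb_out (q : ℂ) (n : ℕ) : Gb q n (n + 1) = 0 := by
  rw [Gb, if_neg (by omega)]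

lemma Gb_pascal1 (q : ℂ) (hq : ∀ j : ℕ, 1 ≤ j → q ^ j ≠ 1) (n k : ℕ) :
    Gb q (n + 1) (k + 1) = Gb q n (k + 1) + q ^ (n - k) * Gb q n k := by
  rcases lt_trichotomy k n with h | h | h
  · rcases Nat.exists_eq_add_of_le (by omega : k + 1 ≤ n) with ⟨m, hm⟩
    subst hm
    have e : k + 1 + m - k = m + 1 := by omega
    rw [Gb, Gb, Gb, if_pos (by omega), if_pos (by omega), if_pos (by omega), e,
      show k + 1 + m + 1 = k + m + 2 by omega, show k + 1 + m = k + m + 1 by omega]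
    exact qBinom_pascal1 q hq k m
  · subst h
    rw [Gb, Gb, Gb, if_pos le_rfl, if_neg (by omega), if_pos le_rfl, Nat.sub_self,
      qBinom_self q hq, qBinom_self q hq]
    ring
  · rw [Gb, Gb, Gb, if_neg (by omega), if_neg (by omega), if_neg (by omega)]
    ring

lemma Gb_pascal2 (q : ℂ) (hq : ∀ j : ℕ, 1 ≤ j → q ^ j ≠ 1) (n k : ℕ) :
    Gb q (n + 1) (k + 1) = q ^ (k + 1) * Gb q n (k + 1) + Gb q n k := by
  rcases lt_trichotomy k n with h | h | h
  · rcases Nat.exists_eq_add_of_le (by omega : k + 1 ≤ n) with ⟨m, hm⟩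
    subst hm
    rw [Gb, Gb, Gb, if_pos (by omega), if_pos (by omega), if_pos (by omega),
      show k + 1 + m + 1 = k + m + 2 by omega, show k + 1 + m = k + m + 1 by omega]
    exact qBinom_pascal2 q hq k m
  · subst h
    rw [Gb, Gb, Gb, if_pos le_rfl, if_neg (by omega), if_pos le_rfl,
      qBinom_self q hq, qBinom_self q hq]
    ring
  · rw [Gb, Gb, Gb, if_neg (by omega), if_neg (by omega), if_neg (by omega)]
    ring

/-- The family of sums C^{(m)}_n = Σ_{k=0}^n q^{k(k+m)} binom(n,k)_q. -/
noncomputable def Cg (q : ℂ) (m n : ℕ) : ℂ :=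
  ∑ k ∈ Finset.range (n + 1), q ^ (k * (k + m)) * Gb q n k

lemma shift_sum (q : ℂ) (hq : ∀ j : ℕ, 1 ≤ j → q ^ j ≠ 1) (m n : ℕ) :
    ∑ k ∈ Finset.range (n + 1), q ^ ((k + 1) * (k + 1 + m)) * Gb q n (k + 1)
      = Cg q m n - 1 := by
  rw [Finset.sum_range_succ, Gb_out, mul_zero, add_zero]
  have h := Finset.sum_range_succ' (fun k => q ^ (k * (k + m)) * Gb q n k) n
  rw [Cg, h, Gb_zero q hq]
  ring_nf
  exact Finset.sum_congr rfl fun x _ => by ring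

lemma Cg_rel1 (q : ℂ) (hq : ∀ j : ℕ, 1 ≤ j → q ^ j ≠ 1) (m n : ℕ) :
    Cg q m (n + 1) = Cg q m n + q ^ (n + m + 1) * Cg q (m + 1) n := by
  rw [Cg, Finset.sum_range_succ']
  have step : ∀ k ∈ Finset.range (n + 1),
      q ^ ((k + 1) * (k + 1 + m)) * Gb q (n + 1) (k + 1)
        = q ^ ((k + 1) * (k + 1 + m)) * Gb q n (k + 1)
          + q ^ (n + m + 1) * (q ^ (k * (k + (m + 1))) * Gb q n k) := by
    intro k hk
    rw [Finset.mem_range] at hk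
    rw [Gb_pascal1 q hq n k]
    rcases Nat.exists_eq_add_of_le (by omega : k ≤ n) with ⟨j, hj⟩
    subst hj
    rw [Nat.add_sub_cancel_left]
    have hpow : q ^ ((k + 1) * (k + 1 + m)) * q ^ j
        = q ^ (k + j + m + 1) * q ^ (k * (k + (m + 1))) := by
      rw [← pow_add, ← pow_add]
      congr 1
      ring
    linear_combination Gb q (k + j) k * hpow
  rw [Finset.sum_congr rfl step, Finset.sum_add_distrib, shift_sum q hq, ← Finset.mul_sum]
  rw [Gb_zero q hq]
  rw [← Cg]
  ring

lemma Cg_rel2 (q : ℂ) (hq : ∀ j : ℕ, 1 ≤ j → q ^ j ≠ 1) (m n : ℕ) :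
    Cg q m (n + 1) = Cg q (m + 1) n + q ^ (m + 1) * Cg q (m + 2) n := by
  rw [Cg, Finset.sum_range_succ']
  have step : ∀ k ∈ Finset.range (n + 1),
      q ^ ((k + 1) * (k + 1 + m)) * Gb q (n + 1) (k + 1)
        = q ^ ((k + 1) * (k + 1 + (m + 1))) * Gb q n (k + 1)
          + q ^ (m + 1) * (q ^ (k * (k + (m + 2))) * Gb q n k) := by
    intro k hk
    rw [Gb_pascal2 q hq n k]
    have hpow1 : q ^ ((k + 1) * (k + 1 + m)) * q ^ (k + 1)
        = q ^ ((k + 1) * (k + 1 + (m + 1))) := by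
      rw [← pow_add, show (k + 1) * (k + 1 + m) + (k + 1) = (k + 1) * (k + 1 + (m + 1)) from by ring]
    have hpow2 : q ^ ((k + 1) * (k + 1 + m))
        = q ^ (m + 1) * q ^ (k * (k + (m + 2))) := by
      rw [← pow_add]
      congr 1
      ring
    linear_combination Gb q n (k + 1) * hpow1 + Gb q n k * hpow2
  rw [Finset.sum_congr rfl step, Finset.sum_add_distrib, shift_sum q hq, ← Finset.mul_sum]
  rw [Gb_zero q hq, ← Cg]
  ring

lemma key_rec (q : ℂ) (hq : ∀ j : ℕ, 1 ≤ j → q ^ j ≠ 1) (n : ℕ) :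
    Cg q 1 (n + 2) = (1 + q - q ^ (n + 2) + q ^ (2 * n + 4)) * Cg q 1 (n + 1)
      + (q ^ (n + 2) - q) * Cg q 1 n := by
  have e1n := Cg_rel1 q hq 1 n
  have e1n1 := Cg_rel1 q hq 1 (n + 1)
  have e3 := Cg_rel1 q hq 2 n
  have e2 := Cg_rel2 q hq 1 n
  linear_combination e1n1 + q ^ (n + 3) * e3 - q ^ (2 * n + 4) * e2 + (q ^ (n + 2) - q) * e1n

/-- The Habiro polynomial H_n(q) of the 5_2 knot. -/
noncomputable def Hab (q : ℂ) (n : ℕ) : ℂ :=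
  (-1) ^ n * q ^ (n * (n + 3) / 2) *
    ∑ k ∈ Finset.range (n + 1), q ^ (k * (k + 1)) * qBinom q n k

lemma Hab_eq_Cg (q : ℂ) (n : ℕ) :
    Hab q n = (-1) ^ n * q ^ (n * (n + 3) / 2) * Cg q 1 n := by
  rw [Hab, Cg]
  congr 1
  apply Finset.sum_congr rfl
  intro k hk
  rw [Finset.mem_range] at hk
  rw [Gb, if_pos (by omega)]

theorem Hab_recursion (q : ℂ) (hq : ∀ j : ℕ, 1 ≤ j → q ^ j ≠ 1) :
    (∀ n : ℕ,
      Hab q (n + 2) + q ^ (3 + n) * (1 + q - q ^ (2 + n) + q ^ (4 + 2 * n)) * Hab q (n + 1)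
        - q ^ (6 + 2 * n) * (-1 + q ^ (1 + n)) * Hab q n = 0) ∧
    Hab q 0 = 1 := by
  constructor
  · intro n
    have key := key_rec q hq n
    rw [Hab_eq_Cg, Hab_eq_Cg, Hab_eq_Cg]
    have e1 : (n + 1) * (n + 1 + 3) / 2 = n * (n + 3) / 2 + (n + 2) := by
      have h : (n + 1) * (n + 1 + 3) = n * (n + 3) + (n + 2) * 2 := by ring
      rw [h, Nat.add_mul_div_right _ _ (by norm_num : 0 < 2)]
    have e2 : (n + 2) * (n + 2 + 3) / 2 = n * (n + 3) / 2 + (2 * n + 5) := by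
      have h : (n + 2) * (n + 2 + 3) = n * (n + 3) + (2 * n + 5) * 2 := by ring
      rw [h, Nat.add_mul_div_right _ _ (by norm_num : 0 < 2)]
    rw [e1, e2, pow_add, pow_add]
    linear_combination ((-1) ^ n * q ^ (n * (n + 3) / 2) * q ^ (2 * n + 5)) * key
  · rw [Hab]
    simp [qBinom, qPoch]
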